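/- Let q be a prime power with characteristic p, and let α = Σ_{n≥1} α_n t^{-pn} ∈ F_q((t^{-1})). Then for every polynomial u = Σ_{m=0}^N c_m t^m ∈ F_q[t], the coefficient of t^{-1} in the Laurent series α·u^p is 0; equivalently, the fractional part of α·u^p never lies in the cylinder set C(1;1) = {Σ_{n≤-1} c_n t^n : c_{-1} = 1}. -/

import Mathlib

open Polynomial HahnSeries

theorem amap (F : Type*) [Field F] (c : F) :
    algebraMap F (HahnSeries ℤ F) c = HahnSeries.single 0 c := by
  rw [HahnSeries.algebraMap_apply', PowerSeries.algebraMap_apply, Algebra.algebraMap_self_apply,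
    HahnSeries.ofPowerSeries_C, HahnSeries.C_apply]

theorem aux (p : ℕ) (F : Type*) [Field F] [Fintype F] (hp : CharP F p)
    (u : Polynomial F) (j : ℤ)
    (hj : ((Polynomial.aeval (HahnSeries.single (-1 : ℤ) (1 : F)) u) ^ p).coeff j ≠ 0) :
    (p : ℤ) ∣ j := by
  have hprime : p.Prime := CharP.char_is_prime F p
  haveI : CharP (HahnSeries ℤ F) p :=
    charP_of_injective_algebraMap (algebraMap F (HahnSeries ℤ F)).injective p
  haveI : ExpChar (HahnSeries ℤ F) p := ExpChar.prime hprime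
  rw [Polynomial.aeval_def, Polynomial.eval₂_eq_sum_range, sum_pow_char] at hj
  rw [show ∀ x : HahnSeries ℤ F, x.coeff j = HahnSeries.coeff.addMonoidHom j x from fun _ => rfl,
    map_sum] at hj
  obtain ⟨i, hi, hne⟩ := Finset.exists_ne_zero_of_sum_ne_zero hj
  rw [mul_pow, ← pow_mul, HahnSeries.single_pow, ← map_pow, one_pow, amap,
    HahnSeries.single_mul_single, zero_add,
    show ∀ x : HahnSeries ℤ F, HahnSeries.coeff.addMonoidHom j x = x.coeff j from fun _ => rfl,
    HahnSeries.coeff_single] at hne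
  simp only [ite_ne_right_iff] at hne
  obtain ⟨hji, -⟩ := hne
  exact ⟨-i, by rw [hji]; ring⟩

/-- For `α = Σ_{n≥1} α_n t^{-pn}` in `F_q((t^{-1}))` and any polynomial
`u ∈ F_q[t]`, the coefficient of `t^{-1}` in `α · u^p` vanishes.  We model
`F_q((t^{-1}))` as `LaurentSeries F` with variable `X = t^{-1}`, so the coefficient
of `t^{-m}` is the coefficient at exponent `m`, and polynomials embed by `t ↦ X⁻¹`,
i.e. via `aeval (single (-1) 1)`. -/
theorem stmt_0 (p : ℕ) (F : Type*) [Field F] [Fintype F] (hp : CharP F p)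
    (α : LaurentSeries F)
    (hα : ∀ m : ℤ, α.coeff m ≠ 0 → ∃ n : ℕ, 1 ≤ n ∧ m = (p : ℤ) * n)
    (u : Polynomial F) :
    (α * (Polynomial.aeval (HahnSeries.single (-1 : ℤ) (1 : F)) u) ^ p).coeff 1 = 0 := by
  have hprime : p.Prime := CharP.char_is_prime F p
  rw [HahnSeries.coeff_mul]
  refine Finset.sum_eq_zero fun ij hij => ?_
  rw [Finset.mem_addAntidiagonal] at hij
  obtain ⟨h1, h2, h3⟩ := hij
  exfalso
  obtain ⟨n, hn, hmn⟩ := hα ij.1 h1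
  have hd2 : (p : ℤ) ∣ ij.2 := aux p F hp u ij.2 h2
  have : (p : ℤ) ∣ 1 := by
    rw [← h3, hmn]
    exact dvd_add ⟨n, rfl⟩ hd2
  have h1p := Int.le_of_dvd one_pos this
  have h2p := hprime.two_le
  omega
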